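/- Let L ≥ 3, let p be a real number with 0 < p < 1, set n = 2L² − 2L + 1 and m = m* = L(L−1), and let e_Z, e_X ∈ F₂^{E}. Then Σ_{y ∈ im ∂₂} Σ_{y' ∈ im ∂₂^*} (1−p)^{n − wt((e_Z+y) ∨ (e_X+y'))} (p/3)^{wt((e_Z+y) ∨ (e_X+y'))} = 2^{−(2n−m−m*)} · Σ_{c ∈ ker ∂₁^*} Σ_{c' ∈ ker ∂₁} (1 − 4p/3)^{wt(c ∨ c')} (−1)^{⟨e_Z,c⟩ + ⟨e_X,c'⟩}. (This expresses the probability under the depolarizing channel of the stabilizer coset (e_Z,e_X) + C_Z^⊥ × C_X^⊥ of the planar surface code as a jointly weighted sum over all pairs of a relative dual cycle and a relative primal cycle.) -/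

import Mathlib

/-- Edge indices of the planar surface code lattice: `Sum.inl (r, c)` is the horizontal
edge joining `(r, c)` and `(r, c+1)` (for `0 ≤ r ≤ L-1`, `0 ≤ c ≤ L-1`); `Sum.inr (r, k)`
is the vertical edge joining `(r, k+1)` and `(r+1, k+1)` (for `0 ≤ r ≤ L-2`,
`1 ≤ k+1 ≤ L-1`).  In total there are `L² + (L-1)² = 2L² - 2L + 1` edges. -/
abbrev SE (L : ℕ) := (Fin L × Fin L) ⊕ (Fin (L - 1) × Fin (L - 1))

/-- Plaquette indices: plaquette `(r, c)` (for `0 ≤ r ≤ L-2`, `0 ≤ c ≤ L-1`) is the unit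
cell with corners `(r,c), (r,c+1), (r+1,c), (r+1,c+1)`. -/
abbrev SP (L : ℕ) := Fin (L - 1) × Fin L

/-- Interior (non-boundary) vertices `V ∖ B`: the pair `(r, k)` stands for the vertex
`(r, k+1)`, i.e. the vertices in columns `1, …, L-1`. -/
abbrev SV (L : ℕ) := Fin L × Fin (L - 1)

/-- Edge–plaquette incidence matrix over `F₂`: the boundary of a plaquette consists of
its (at most four) sides that belong to the edge set. -/
def sM2 (L : ℕ) : Matrix (SE L) (SP L) (ZMod 2) := fun e q =>
  match e with
  | Sum.inl rc =>
      if (rc.1.val = q.1.val ∨ rc.1.val = q.1.val + 1) ∧ rc.2.val = q.2.val then 1 else 0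
  | Sum.inr rk =>
      if rk.1.val = q.1.val ∧ (rk.2.val = q.2.val ∨ rk.2.val + 1 = q.2.val) then 1 else 0

/-- Interior-vertex–edge incidence matrix over `F₂` (a vertex of `B` contributes
nothing: this is the relative incidence). -/
def sM1 (L : ℕ) : Matrix (SV L) (SE L) (ZMod 2) := fun v e =>
  match e with
  | Sum.inl rc =>
      if rc.1.val = v.1.val ∧ (rc.2.val = v.2.val ∨ rc.2.val = v.2.val + 1) then 1 else 0
  | Sum.inr rk =>
      if rk.2.val = v.2.val ∧ (rk.1.val = v.1.val ∨ rk.1.val + 1 = v.1.val) then 1 else 0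

/-- The boundary map `∂₂ : F₂^{P} → F₂^{E}`, sending the indicator of a plaquette to the
sum of the indicators of its boundary edges in `E`. -/
def sD2 (L : ℕ) : (SP L → ZMod 2) →ₗ[ZMod 2] (SE L → ZMod 2) := (sM2 L).mulVecLin

/-- The relative boundary map `∂₁ : F₂^{E} → F₂^{V∖B}`, sending the indicator of an edge
to the sum of the indicators of its endpoints lying outside `B`. -/
def sD1 (L : ℕ) : (SE L → ZMod 2) →ₗ[ZMod 2] (SV L → ZMod 2) := (sM1 L).mulVecLin

/-- The transpose `∂₁^* : F₂^{E} → F₂^{P}` of `∂₂`. -/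
def sD1s (L : ℕ) : (SE L → ZMod 2) →ₗ[ZMod 2] (SP L → ZMod 2) :=
  (Matrix.transpose (sM2 L)).mulVecLin

/-- The transpose `∂₂^* : F₂^{V∖B} → F₂^{E}` of `∂₁`. -/
def sD2s (L : ℕ) : (SV L → ZMod 2) →ₗ[ZMod 2] (SE L → ZMod 2) :=
  (Matrix.transpose (sM1 L)).mulVecLin

/-- Hamming weight of an `F₂`-vector. -/
def wt {α : Type*} [Fintype α] (x : α → ZMod 2) : ℕ :=
  (Finset.univ.filter fun a => x a ≠ 0).card

/-- Indicator vector of a finite set of coordinates. -/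
def ind {α : Type*} [Fintype α] [DecidableEq α] (D : Finset α) : α → ZMod 2 :=
  fun a => if a ∈ D then 1 else 0

/-- Coordinatewise OR of two `F₂`-vectors (coordinatewise maximum, viewing
coordinates in `{0,1}`). -/
def orv {α : Type*} (x x' : α → ZMod 2) : α → ZMod 2 :=
  fun a => if x a = 0 ∧ x' a = 0 then 0 else 1

set_option linter.unusedSectionVars false
set_option maxHeartbeats 1000000


open Finset

namespace SurfDual

def chi (t : ZMod 2) : ℝ := if t = 0 then 1 else -1

lemma zmod2_cases (s : ZMod 2) : s = 0 ∨ s = 1 := by revert s; decide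

@[simp] lemma chi_zero : chi 0 = 1 := by simp [chi]

lemma chi_one : chi 1 = -1 := by norm_num [chi]

lemma chi_add (s t : ZMod 2) : chi (s + t) = chi s * chi t := by
  rcases zmod2_cases s with rfl | rfl <;> rcases zmod2_cases t with rfl | rfl <;>
    norm_num [chi] <;> decide

variable {α : Type*} [Fintype α] [DecidableEq α]

def ip {α : Type*} [Fintype α] (x y : α → ZMod 2) : ZMod 2 := ∑ a, x a * y a

lemma ip_comm (x y : α → ZMod 2) : ip x y = ip y x := by simp [ip, mul_comm]

lemma ip_add_right (z c d : α → ZMod 2) : ip z (c + d) = ip z c + ip z d := by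
  simp [ip, Pi.add_apply, mul_add, Finset.sum_add_distrib]

lemma ip_add_left (c d z : α → ZMod 2) : ip (c + d) z = ip c z + ip d z := by
  simp [ip, Pi.add_apply, add_mul, Finset.sum_add_distrib]

@[simp] lemma ip_zero_right (z : α → ZMod 2) : ip z 0 = 0 := by simp [ip]

@[simp] lemma ip_zero_left (z : α → ZMod 2) : ip 0 z = 0 := by simp [ip]

lemma ip_single (b : α) (w : α → ZMod 2) : ip (Pi.single b 1) w = w b := by
  simp [ip, Pi.single_apply, ite_mul]

omit [Fintype α] [DecidableEq α] in
lemma addself (v : α → ZMod 2) : v + v = 0 := by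
  funext a; exact CharTwo.add_self_eq_zero _

omit [Fintype α] [DecidableEq α] in
lemma addaddself (c v : α → ZMod 2) : c + v + v = c := by
  rw [add_assoc, addself, add_zero]

lemma sum_chi_all (z : α → ZMod 2) (hz : z ≠ 0) :
    ∑ c : α → ZMod 2, chi (ip z c) = 0 := by
  obtain ⟨a, ha⟩ : ∃ a, z a ≠ 0 := by
    by_contra h; push_neg at h; exact hz (funext h)
  have hza : z a = 1 := (zmod2_cases (z a)).resolve_left ha
  have hipd : ip z (Pi.single a 1) = 1 := by
    rw [ip_comm, ip_single, hza]
  have hre : ∑ c : α → ZMod 2, chi (ip z (c + Pi.single a 1))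
      = ∑ c : α → ZMod 2, chi (ip z c) :=
    Fintype.sum_equiv (Equiv.addRight (Pi.single a 1)) _ _ (fun c => rfl)
  have hre2 : ∀ c : α → ZMod 2, chi (ip z (c + Pi.single a 1)) = - chi (ip z c) := by
    intro c
    rw [ip_add_right, chi_add, hipd, chi_one]; ring
  rw [Finset.sum_congr rfl (fun c _ => hre2 c), Finset.sum_neg_distrib] at hre
  linarith

lemma sum_chi_all_eq (z : α → ZMod 2) :
    ∑ c : α → ZMod 2, chi (ip z c) = if z = 0 then ((2 : ℝ) ^ Fintype.card α) else 0 := by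
  split_ifs with h
  · subst h
    simp only [ip_zero_left, chi_zero, Finset.sum_const, Finset.card_univ, nsmul_eq_mul, mul_one]
    rw [Fintype.card_fun]
    norm_num
  · exact sum_chi_all z h

lemma sum_chi_subgroup (S : Finset (α → ZMod 2)) (h0 : (0 : α → ZMod 2) ∈ S)
    (hadd : ∀ c ∈ S, ∀ c' ∈ S, c + c' ∈ S) (z : α → ZMod 2) :
    ∑ c ∈ S, chi (ip z c) = if ∀ c ∈ S, ip z c = 0 then (S.card : ℝ) else 0 := by
  split_ifs with h
  · rw [Finset.sum_congr rfl (fun c hc => by rw [h c hc, chi_zero]), Finset.sum_const,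
      nsmul_eq_mul, mul_one]
  · push_neg at h
    obtain ⟨c₀, hc₀S, hc₀⟩ := h
    have hipc₀ : ip z c₀ = 1 := (zmod2_cases _).resolve_left hc₀
    have key : ∑ c ∈ S, chi (ip z c) = ∑ c ∈ S, chi (ip z (c + c₀)) := by
      refine Finset.sum_nbij' (fun c => c + c₀) (fun c => c + c₀) ?_ ?_ ?_ ?_ ?_
      · exact fun c hc => hadd c hc c₀ hc₀S
      · exact fun c hc => hadd c hc c₀ hc₀S
      · exact fun c _ => addaddself c c₀
      · exact fun c _ => addaddself c c₀
      · intro c _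
        rw [addaddself]
    have key2 : ∀ c : α → ZMod 2, chi (ip z (c + c₀)) = - chi (ip z c) := by
      intro c; rw [ip_add_right, chi_add, hipc₀, chi_one]; ring
    rw [Finset.sum_congr rfl (fun c _ => key2 c), Finset.sum_neg_distrib] at key
    linarith

lemma double_count (S : Finset (α → ZMod 2)) (h0 : (0 : α → ZMod 2) ∈ S)
    (hadd : ∀ c ∈ S, ∀ c' ∈ S, c + c' ∈ S) :
    (S.card : ℝ) * ((Finset.univ.filter
        (fun z : α → ZMod 2 => ∀ c ∈ S, ip z c = 0)).card : ℝ)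
      = (2 : ℝ) ^ Fintype.card α := by
  have h1 : ∑ c ∈ S, ∑ z : α → ZMod 2, chi (ip z c) = (2 : ℝ) ^ Fintype.card α := by
    have : ∀ c ∈ S, ∑ z : α → ZMod 2, chi (ip z c)
        = if c = 0 then ((2:ℝ) ^ Fintype.card α) else 0 := by
      intro c _
      rw [← sum_chi_all_eq c]
      exact Finset.sum_congr rfl (fun z _ => by rw [ip_comm])
    rw [Finset.sum_congr rfl this, Finset.sum_eq_single_of_mem 0 h0 (fun b _ hb => if_neg hb), if_pos rfl]
  have h2 : ∑ z : α → ZMod 2, ∑ c ∈ S, chi (ip z c)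
      = (S.card : ℝ) * ((Finset.univ.filter
        (fun z : α → ZMod 2 => ∀ c ∈ S, ip z c = 0)).card : ℝ) := by
    rw [Finset.sum_congr rfl (fun z _ => sum_chi_subgroup S h0 hadd z)]
    rw [Finset.sum_ite, Finset.sum_const, Finset.sum_const]
    simp [mul_comm]
  rw [← h2, Finset.sum_comm, h1]

end SurfDual



open Finset Matrix
namespace SurfDual

section MatrixPart
variable {α β : Type*} [Fintype α] [DecidableEq α] [Fintype β] [DecidableEq β]
variable (N : Matrix α β (ZMod 2))

lemma ip_adjoint (u : β → ZMod 2) (c : α → ZMod 2) :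
    ip (N.mulVec u) c = ip u (Nᵀ.mulVec c) := by
  show (N.mulVec u) ⬝ᵥ c = u ⬝ᵥ (Nᵀ.mulVec c)
  calc (N.mulVec u) ⬝ᵥ c = c ⬝ᵥ (N.mulVec u) := dotProduct_comm _ _
    _ = (c ᵥ* N) ⬝ᵥ u := Matrix.dotProduct_mulVec c N u
    _ = (Nᵀ.mulVec c) ⬝ᵥ u := by rw [Matrix.mulVec_transpose]
    _ = u ⬝ᵥ (Nᵀ.mulVec c) := dotProduct_comm _ _

def Kf : Finset (α → ZMod 2) := univ.filter (fun c => Nᵀ.mulVec c = 0)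

def Af : Finset (α → ZMod 2) := univ.filter (fun z => ∃ u, N.mulVec u = z)

lemma Kf0 : (0 : α → ZMod 2) ∈ Kf N := by simp [Kf]

lemma Kfadd : ∀ c ∈ Kf N, ∀ c' ∈ Kf N, c + c' ∈ Kf N := by
  intro c hc c' hc'
  simp only [Kf, mem_filter, mem_univ, true_and] at *
  rw [Matrix.mulVec_add, hc, hc', add_zero]

lemma Af0 : (0 : α → ZMod 2) ∈ Af N := by
  simp only [Af, mem_filter, mem_univ, true_and]
  exact ⟨0, Matrix.mulVec_zero N⟩

lemma Afadd : ∀ z ∈ Af N, ∀ z' ∈ Af N, z + z' ∈ Af N := by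
  intro z hz z' hz'
  simp only [Af, mem_filter, mem_univ, true_and] at *
  obtain ⟨u, rfl⟩ := hz; obtain ⟨u', rfl⟩ := hz'
  exact ⟨u + u', Matrix.mulVec_add N u u'⟩

lemma mem_Kf_iff (c : α → ZMod 2) : c ∈ Kf N ↔ ∀ z ∈ Af N, ip z c = 0 := by
  constructor
  · intro hc z hz
    simp only [Kf, mem_filter, mem_univ, true_and] at hc
    simp only [Af, mem_filter, mem_univ, true_and] at hz
    obtain ⟨u, rfl⟩ := hz
    rw [ip_adjoint, hc, ip_zero_right]
  · intro h
    simp only [Kf, mem_filter, mem_univ, true_and]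
    funext b
    have := h (N.mulVec (Pi.single b 1)) (by
      simp only [Af, mem_filter, mem_univ, true_and]; exact ⟨_, rfl⟩)
    rw [ip_adjoint, ip_single] at this
    simpa using this

lemma card_Af (hN : Function.Injective N.mulVec) :
    (Af N).card = 2 ^ Fintype.card β := by
  have h : Af N = Finset.image N.mulVec Finset.univ := by
    ext z
    simp [Af, eq_comm]
  rw [h, Finset.card_image_of_injective _ hN, Finset.card_univ, Fintype.card_fun]
  norm_num

lemma cardAK : ((Af N).card : ℝ) * ((Kf N).card : ℝ) = 2 ^ Fintype.card α := by
  have hdc := double_count (Af N) (Af0 N) (Afadd N)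
  have hset : (univ.filter (fun c : α → ZMod 2 => ∀ z ∈ Af N, ip c z = 0)) = Kf N := by
    ext c
    simp only [mem_filter, mem_univ, true_and]
    rw [mem_Kf_iff]
    constructor
    · intro h z hz; rw [ip_comm]; exact h z hz
    · intro h z hz; rw [ip_comm]; exact h z hz
  rw [hset] at hdc
  exact hdc

lemma Af_eq_Bf : Af N = univ.filter (fun z : α → ZMod 2 => ∀ c ∈ Kf N, ip z c = 0) := by
  set Bf := univ.filter (fun z : α → ZMod 2 => ∀ c ∈ Kf N, ip z c = 0) with hBf
  have hsub : Af N ⊆ Bf := by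
    intro z hz
    simp only [hBf, mem_filter, mem_univ, true_and]
    intro c hc
    exact (mem_Kf_iff N c).1 hc z hz
  have hdc := double_count (Kf N) (Kf0 N) (Kfadd N)
  have hak := cardAK N
  have hKpos : (0 : ℝ) < ((Kf N).card : ℝ) := by
    have : (Kf N).Nonempty := ⟨0, Kf0 N⟩
    exact_mod_cast Finset.card_pos.2 this
  have hcards : ((Af N).card : ℝ) = (Bf.card : ℝ) := by
    have h1 : ((Af N).card : ℝ) * ((Kf N).card : ℝ) = (Bf.card : ℝ) * ((Kf N).card : ℝ) := by
      rw [hak, ← hdc]; ring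
    exact mul_right_cancel₀ (ne_of_gt hKpos) h1
  have : Bf.card ≤ (Af N).card := le_of_eq (Nat.cast_injective hcards).symm
  exact (Finset.eq_of_subset_of_card_le hsub this).symm ▸ rfl

end MatrixPart
end SurfDual

namespace SurfDual
open Finset Matrix
variable {α β : Type*} [Fintype α] [DecidableEq α] [Fintype β] [DecidableEq β]
variable (N : Matrix α β (ZMod 2))

lemma key_orth (z : α → ZMod 2) :
    ∑ c ∈ Kf N, chi (ip z c) = if (∃ u, N.mulVec u = z) then ((Kf N).card : ℝ) else 0 := by
  rw [sum_chi_subgroup (Kf N) (Kf0 N) (Kfadd N) z]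
  have h : (∀ c ∈ Kf N, ip z c = 0) ↔ (∃ u, N.mulVec u = z) := by
    have h2 : (∃ u, N.mulVec u = z) ↔ z ∈ Af N := by simp [Af]
    rw [h2, Af_eq_Bf N]
    simp
  rw [if_congr h rfl rfl]

lemma cardK_real (hN : Function.Injective N.mulVec) :
    (2:ℝ) ^ Fintype.card β * ((Kf N).card : ℝ) = 2 ^ Fintype.card α := by
  have := cardAK N
  rw [card_Af N hN] at this
  exact_mod_cast this

end SurfDual



set_option linter.unusedSectionVars false
set_option maxHeartbeats 1000000
open Finset Matrix
namespace SurfDual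

variable {α : Type*} [Fintype α] [DecidableEq α]

lemma orv_eq_zero_iff (x x' : α → ZMod 2) (a : α) :
    orv x x' a = 0 ↔ (x a = 0 ∧ x' a = 0) := by
  unfold orv
  split_ifs with h
  · simpa using h
  · simpa using h

lemma prod_if_eq_pow (q r : ℝ) (v : α → ZMod 2) :
    ∏ a, (if v a = 0 then q else r) = q ^ (Fintype.card α - wt v) * r ^ wt v := by
  rw [Finset.prod_ite, Finset.prod_const, Finset.prod_const]
  congr 2
  · have h := Finset.card_filter_add_card_filter_not
      (s := (univ : Finset α)) (p := fun a => v a = 0)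
    unfold wt
    rw [Finset.card_univ] at h
    have h2 : (univ.filter (fun a => ¬ v a = 0)).card
        = (univ.filter (fun a => v a ≠ 0)).card := rfl
    omega

lemma chi_sum_eq_prod {s : Finset α} (f : α → ZMod 2) :
    chi (∑ a ∈ s, f a) = ∏ a ∈ s, chi (f a) := by
  classical
  induction s using Finset.cons_induction with
  | empty => simp
  | cons a s ha ih => rw [Finset.sum_cons, Finset.prod_cons, chi_add, ih]

lemma zmod2_sum_expand (f : ZMod 2 → ℝ) : ∑ s : ZMod 2, f s = f 0 + f 1 := by
  rw [show (univ : Finset (ZMod 2)) = {0, 1} from by decide]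
  rw [Finset.sum_insert (by decide), Finset.sum_singleton]

lemma coord_sum (p : ℝ) (u v : ZMod 2) :
    ∑ s : ZMod 2, ∑ t : ZMod 2,
      (if s = 0 ∧ t = 0 then 1 - p else p / 3) * chi (s * u) * chi (t * v)
    = if u = 0 ∧ v = 0 then 1 else 1 - 4 * p / 3 := by
  rw [zmod2_sum_expand, zmod2_sum_expand, zmod2_sum_expand]
  rcases zmod2_cases u with rfl | rfl <;> rcases zmod2_cases v with rfl | rfl <;>
    norm_num [chi] <;> ring_nf <;> simp [chi] <;> ring

lemma fourier (p : ℝ) (c c' : α → ZMod 2) :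
    ∑ y : α → ZMod 2, ∑ y' : α → ZMod 2,
      (∏ a, (if y a = 0 ∧ y' a = 0 then 1 - p else p / 3)) * chi (ip y c) * chi (ip y' c')
    = (1 - 4 * p / 3) ^ wt (orv c c') := by
  have step1 : ∀ y y' : α → ZMod 2,
      (∏ a, (if y a = 0 ∧ y' a = 0 then 1 - p else p / 3)) * chi (ip y c) * chi (ip y' c')
      = ∏ a, ((if y a = 0 ∧ y' a = 0 then 1 - p else p / 3) * chi (y a * c a) * chi (y' a * c' a)) := by
    intro y y'
    rw [show ip y c = ∑ a, y a * c a from rfl, show ip y' c' = ∑ a, y' a * c' a from rfl,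
      chi_sum_eq_prod, chi_sum_eq_prod, Finset.prod_mul_distrib, Finset.prod_mul_distrib]
  have step2 : ∀ y : α → ZMod 2,
      ∑ y' : α → ZMod 2, ∏ a,
        ((if y a = 0 ∧ y' a = 0 then 1 - p else p / 3) * chi (y a * c a) * chi (y' a * c' a))
      = ∏ a, ∑ t : ZMod 2,
        ((if y a = 0 ∧ t = 0 then 1 - p else p / 3) * chi (y a * c a) * chi (t * c' a)) :=
    fun y => (Fintype.prod_sum (fun a t =>
      (if y a = 0 ∧ t = 0 then 1 - p else p / 3) * chi (y a * c a) * chi (t * c' a))).symm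
  refine Eq.trans (Finset.sum_congr rfl fun y _ =>
    Eq.trans (Finset.sum_congr rfl fun y' _ => step1 y y') (step2 y)) ?_
  refine Eq.trans ((Fintype.prod_sum fun (a : α) (s : ZMod 2) => ∑ t : ZMod 2,
      ((if s = 0 ∧ t = 0 then 1 - p else p / 3) * chi (s * c a) * chi (t * c' a))).symm) ?_
  have step3 : ∀ a, (∑ s : ZMod 2, ∑ t : ZMod 2,
      ((if s = 0 ∧ t = 0 then 1 - p else p / 3) * chi (s * c a) * chi (t * c' a)))
      = if orv c c' a = 0 then 1 else 1 - 4 * p / 3 := by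
    intro a
    exact (coord_sum p (c a) (c' a)).trans
      (if_congr (orv_eq_zero_iff c c' a).symm rfl rfl)
  calc ∏ a, ∑ s : ZMod 2, ∑ t : ZMod 2,
      ((if s = 0 ∧ t = 0 then 1 - p else p / 3) * chi (s * c a) * chi (t * c' a))
      = ∏ a, (if orv c c' a = 0 then (1:ℝ) else 1 - 4 * p / 3) :=
        Finset.prod_congr rfl (fun a _ => step3 a)
    _ = 1 ^ (Fintype.card α - wt (orv c c')) * (1 - 4 * p / 3) ^ wt (orv c c') :=
        prod_if_eq_pow 1 (1 - 4 * p / 3) (orv c c')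
    _ = (1 - 4 * p / 3) ^ wt (orv c c') := by rw [one_pow, one_mul]

lemma g_eq_prod (p : ℝ) (z z' : α → ZMod 2) :
    (1 - p) ^ (Fintype.card α - wt (orv z z')) * (p / 3) ^ wt (orv z z')
      = ∏ a, (if z a = 0 ∧ z' a = 0 then 1 - p else p / 3) := by
  rw [show (fun a => if z a = 0 ∧ z' a = 0 then (1:ℝ) - p else p / 3)
      = fun a => if orv z z' a = 0 then 1 - p else p / 3 from
    funext fun a => if_congr (orv_eq_zero_iff z z' a).symm rfl rfl]
  exact (prod_if_eq_pow (1 - p) (p / 3) (orv z z')).symm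

end SurfDual



set_option linter.unusedSectionVars false
open Finset Matrix
namespace SurfDual

lemma eq_of_add_eq_zero' {α : Type*} (x y : α → ZMod 2) (h : x + y = 0) : x = y :=
  calc x = x + y + y := (addaddself x y).symm
    _ = 0 + y := by rw [h]
    _ = y := zero_add y

lemma inj_of_ker {α β : Type*} [Fintype α] [Fintype β] [DecidableEq α] [DecidableEq β]
    (M : Matrix α β (ZMod 2)) (key : ∀ x, M.mulVec x = 0 → x = 0) :
    Function.Injective M.mulVec := by
  intro x y hxy
  refine eq_of_add_eq_zero' x y (key _ ?_)
  rw [Matrix.mulVec_add, hxy, addself]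

lemma sM2_key (L : ℕ) (hL : 3 ≤ L) :
    ∀ x : SP L → ZMod 2, (sM2 L).mulVec x = 0 → x = 0 := by
  intro x hx
  have main : ∀ i, ∀ (hi : i < L - 1) (cc : Fin L), x (⟨i, hi⟩, cc) = 0 := by
    intro i
    induction i with
    | zero =>
      intro hi cc
      have hlt : (0:ℕ) < L := by omega
      have h0 : ∑ q : SP L, sM2 L (Sum.inl (⟨0, hlt⟩, cc)) q * x q = 0 :=
        congrFun hx (Sum.inl (⟨0, hlt⟩, cc))
      rw [Fintype.sum_eq_single ((⟨0, hi⟩ : Fin (L-1)), cc) ?_] at h0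
      · rw [show sM2 L (Sum.inl (⟨0, hlt⟩, cc)) (⟨0, hi⟩, cc) = 1 from by simp [sM2],
          one_mul] at h0
        exact h0
      · intro q hq
        rcases q with ⟨qi, qc⟩
        show (if ((0:ℕ) = qi.val ∨ (0:ℕ) = qi.val + 1) ∧ cc.val = qc.val then (1 : ZMod 2)
            else 0) * x (qi, qc) = 0
        by_cases h : ((0:ℕ) = qi.val ∨ (0:ℕ) = qi.val + 1) ∧ cc.val = qc.val
        · exfalso
          apply hq
          obtain ⟨h1, h2⟩ := h
          have e1 : qi = (⟨0, hi⟩ : Fin (L-1)) := Fin.ext (show qi.val = 0 by omega)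
          have e2 : qc = cc := Fin.ext h2.symm
          rw [e1, e2]
        · rw [if_neg h, zero_mul]
    | succ i ih =>
      intro hi cc
      have hlt : i + 1 < L := by omega
      have hip : i < L - 1 := by omega
      have h0 : ∑ q : SP L, sM2 L (Sum.inl (⟨i + 1, hlt⟩, cc)) q * x q = 0 :=
        congrFun hx (Sum.inl (⟨i + 1, hlt⟩, cc))
      rw [Fintype.sum_eq_add ((⟨i + 1, hi⟩ : Fin (L-1)), cc) ((⟨i, hip⟩ : Fin (L-1)), cc)
        (by simp [Prod.ext_iff, Fin.ext_iff]) ?_] at h0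
      · rw [show sM2 L (Sum.inl (⟨i + 1, hlt⟩, cc)) (⟨i + 1, hi⟩, cc) = 1 from by simp [sM2],
          show sM2 L (Sum.inl (⟨i + 1, hlt⟩, cc)) (⟨i, hip⟩, cc) = 1 from by simp [sM2],
          one_mul, ih hip cc, mul_zero, add_zero] at h0
        exact h0
      · intro q hq
        rcases q with ⟨qi, qc⟩
        show (if (i + 1 = qi.val ∨ i + 1 = qi.val + 1) ∧ cc.val = qc.val then (1 : ZMod 2)
            else 0) * x (qi, qc) = 0
        by_cases h : (i + 1 = qi.val ∨ i + 1 = qi.val + 1) ∧ cc.val = qc.val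
        · exfalso
          obtain ⟨h1, h2⟩ := h
          have e2 : qc = cc := Fin.ext h2.symm
          rcases h1 with h1 | h1
          · exact hq.1 (by rw [show qi = (⟨i + 1, hi⟩ : Fin (L-1)) from
              Fin.ext (show qi.val = i + 1 by omega), e2])
          · exact hq.2 (by rw [show qi = (⟨i, hip⟩ : Fin (L-1)) from
              Fin.ext (show qi.val = i by omega), e2])
        · rw [if_neg h, zero_mul]
  funext q
  rcases q with ⟨⟨i, hi⟩, cc⟩
  exact main i hi cc

lemma sM1t_key (L : ℕ) (hL : 3 ≤ L) :
    ∀ x : SV L → ZMod 2, (sM1 L)ᵀ.mulVec x = 0 → x = 0 := by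
  intro x hx
  have main : ∀ k, ∀ (hk : k < L - 1) (r : Fin L), x (r, ⟨k, hk⟩) = 0 := by
    intro k
    induction k with
    | zero =>
      intro hk r
      have hlt : (0:ℕ) < L := by omega
      have h0 : ∑ v : SV L, sM1 L v (Sum.inl (r, ⟨0, hlt⟩)) * x v = 0 :=
        congrFun hx (Sum.inl (r, ⟨0, hlt⟩))
      rw [Fintype.sum_eq_single (r, (⟨0, hk⟩ : Fin (L-1))) ?_] at h0
      · rw [show sM1 L (r, ⟨0, hk⟩) (Sum.inl (r, ⟨0, hlt⟩)) = 1 from by simp [sM1],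
          one_mul] at h0
        exact h0
      · intro v hv
        rcases v with ⟨vr, vk⟩
        show (if r.val = vr.val ∧ ((0:ℕ) = vk.val ∨ (0:ℕ) = vk.val + 1) then (1 : ZMod 2)
            else 0) * x (vr, vk) = 0
        by_cases h : r.val = vr.val ∧ ((0:ℕ) = vk.val ∨ (0:ℕ) = vk.val + 1)
        · exfalso
          apply hv
          obtain ⟨h1, h2⟩ := h
          have e1 : vr = r := Fin.ext h1.symm
          have e2 : vk = (⟨0, hk⟩ : Fin (L-1)) := Fin.ext (show vk.val = 0 by omega)
          rw [e1, e2]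
        · rw [if_neg h, zero_mul]
    | succ k ih =>
      intro hk r
      have hlt : k + 1 < L := by omega
      have hkp : k < L - 1 := by omega
      have h0 : ∑ v : SV L, sM1 L v (Sum.inl (r, ⟨k + 1, hlt⟩)) * x v = 0 :=
        congrFun hx (Sum.inl (r, ⟨k + 1, hlt⟩))
      rw [Fintype.sum_eq_add (r, (⟨k + 1, hk⟩ : Fin (L-1))) (r, (⟨k, hkp⟩ : Fin (L-1)))
        (by simp [Prod.ext_iff, Fin.ext_iff]) ?_] at h0
      · rw [show sM1 L (r, ⟨k + 1, hk⟩) (Sum.inl (r, ⟨k + 1, hlt⟩)) = 1 from by simp [sM1],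
          show sM1 L (r, ⟨k, hkp⟩) (Sum.inl (r, ⟨k + 1, hlt⟩)) = 1 from by simp [sM1],
          one_mul, ih hkp r, mul_zero, add_zero] at h0
        exact h0
      · intro v hv
        rcases v with ⟨vr, vk⟩
        show (if r.val = vr.val ∧ (k + 1 = vk.val ∨ k + 1 = vk.val + 1) then (1 : ZMod 2)
            else 0) * x (vr, vk) = 0
        by_cases h : r.val = vr.val ∧ (k + 1 = vk.val ∨ k + 1 = vk.val + 1)
        · exfalso
          obtain ⟨h1, h2⟩ := h
          have e1 : vr = r := Fin.ext h1.symm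
          rcases h2 with h2 | h2
          · exact hv.1 (by rw [e1, show vk = (⟨k + 1, hk⟩ : Fin (L-1)) from
              Fin.ext (show vk.val = k + 1 by omega)])
          · exact hv.2 (by rw [e1, show vk = (⟨k, hkp⟩ : Fin (L-1)) from
              Fin.ext (show vk.val = k by omega)])
        · rw [if_neg h, zero_mul]
  funext v
  rcases v with ⟨r, ⟨k, hk⟩⟩
  exact main k hk r

end SurfDual

open Finset Matrix SurfDual

lemma natcard_aux (L : ℕ) (h : 1 ≤ L) :
    2 * L ^ 2 - 2 * L + 1 = L * L + (L - 1) * (L - 1) := by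
  obtain ⟨l, rfl⟩ : ∃ l, L = l + 1 := ⟨L - 1, by omega⟩
  have h2 : 2 * (l + 1) ^ 2 = (2 * l ^ 2 + 2 * l) + 2 * (l + 1) := by ring
  rw [h2, Nat.add_sub_cancel, Nat.add_sub_cancel]
  ring


/-- **Kramers–Wannier–MacWilliams duality for the planar surface code under
depolarizing noise.**  With `n = 2L² − 2L + 1` qubits and `m = m* = L(L−1)`, the
probability of the stabilizer coset
`(e_Z, e_X) + C_Z^⊥ × C_X^⊥ = (e_Z + im ∂₂) × (e_X + im ∂₂^*)` under the depolarizing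
channel with parameter `p` equals
`2^{−(2n−m−m*)} Σ_{c ∈ ker ∂₁^*} Σ_{c' ∈ ker ∂₁} (1−4p/3)^{wt(c ∨ c')}
(−1)^{⟨e_Z,c⟩+⟨e_X,c'⟩}`, a jointly weighted sum over all pairs of a relative dual
cycle and a relative primal cycle. -/
theorem planar_coset_probability_depolarizing_dual_expansion
    (L n m mstar : ℕ) (hL : 3 ≤ L)
    (hn : n = 2 * L ^ 2 - 2 * L + 1) (hm : m = L * (L - 1)) (hms : mstar = L * (L - 1))
    (p : ℝ) (hp0 : 0 < p) (hp1 : p < 1)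
    (eZ eX : SE L → ZMod 2) :
    ∑ y ∈ Finset.univ.filter (fun y : SE L → ZMod 2 => ∃ c, sD2 L c = y),
      ∑ y' ∈ Finset.univ.filter (fun y' : SE L → ZMod 2 => ∃ x, sD2s L x = y'),
        (1 - p) ^ (n - wt (orv (eZ + y) (eX + y'))) *
          (p / 3) ^ wt (orv (eZ + y) (eX + y'))
    = (2 : ℝ) ^ (-(2 * (n : ℤ) - (m : ℤ) - (mstar : ℤ))) *
        ∑ c ∈ Finset.univ.filter (fun c : SE L → ZMod 2 => sD1s L c = 0),
          ∑ c' ∈ Finset.univ.filter (fun c' : SE L → ZMod 2 => sD1 L c' = 0),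
            (1 - 4 * p / 3) ^ wt (orv c c') *
              (if (∑ a, eZ a * c a) + (∑ a, eX a * c' a) = (0 : ZMod 2)
               then (1 : ℝ) else -1) := by

  -- cardinalities
  have hcardSE : Fintype.card (SE L) = n := by
    have h1 : Fintype.card (SE L) = L * L + (L - 1) * (L - 1) := by
      simp [Fintype.card_sum, Fintype.card_prod, Fintype.card_fin]
    rw [h1, hn, natcard_aux L (by omega)]
  have hcardSP : Fintype.card (SP L) = m := by
    have h1 : Fintype.card (SP L) = (L - 1) * L := by
      simp [Fintype.card_prod, Fintype.card_fin]
    rw [h1, hm, Nat.mul_comm]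
  have hcardSV : Fintype.card (SV L) = mstar := by
    have h1 : Fintype.card (SV L) = L * (L - 1) := by
      simp [Fintype.card_prod, Fintype.card_fin]
    rw [h1, hms]
  -- injectivity
  have hinj2 : Function.Injective (sM2 L).mulVec := inj_of_ker _ (sM2_key L hL)
  have hinj1 : Function.Injective ((sM1 L)ᵀ).mulVec := inj_of_ker _ (sM1t_key L hL)
  -- finset identifications
  have hA1 : Finset.univ.filter (fun y : SE L → ZMod 2 => ∃ c, sD2 L c = y)
      = Af (sM2 L) := by
    ext z; simp only [Af, Finset.mem_filter, Finset.mem_univ, true_and]; simp [sD2, Matrix.mulVecLin_apply]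
  have hA2 : Finset.univ.filter (fun y' : SE L → ZMod 2 => ∃ x, sD2s L x = y')
      = Af ((sM1 L)ᵀ) := by
    ext z; simp [Af, sD2s, Matrix.mulVecLin_apply, Matrix.mulVec_transpose]
  have hK1 : Finset.univ.filter (fun c : SE L → ZMod 2 => sD1s L c = 0)
      = Kf (sM2 L) := by
    ext z; simp [Kf, sD1s, Matrix.mulVecLin_apply, Matrix.mulVec_transpose]
  have hK2 : Finset.univ.filter (fun c' : SE L → ZMod 2 => sD1 L c' = 0)
      = Kf ((sM1 L)ᵀ) := by
    ext z; simp only [Kf, Finset.mem_filter, Finset.mem_univ, true_and]; simp [sD1, Matrix.mulVecLin_apply, Matrix.transpose_transpose,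
      Matrix.mulVec_transpose]
  set K1 := Kf (sM2 L)
  set K2 := Kf ((sM1 L)ᵀ)
  set A1 := Af (sM2 L)
  set A2 := Af ((sM1 L)ᵀ)
  set G : (SE L → ZMod 2) → (SE L → ZMod 2) → ℝ :=
    fun z z' => ∏ a, (if z a = 0 ∧ z' a = 0 then 1 - p else p / 3) with hG
  -- LHS rewriting
  have hLHS : ∑ y ∈ Finset.univ.filter (fun y : SE L → ZMod 2 => ∃ c, sD2 L c = y),
      ∑ y' ∈ Finset.univ.filter (fun y' : SE L → ZMod 2 => ∃ x, sD2s L x = y'),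
        (1 - p) ^ (n - wt (orv (eZ + y) (eX + y'))) *
          (p / 3) ^ wt (orv (eZ + y) (eX + y'))
      = ∑ y ∈ A1, ∑ y' ∈ A2, G (eZ + y) (eX + y') := by
    rw [hA1, hA2]
    refine Finset.sum_congr rfl fun y _ => Finset.sum_congr rfl fun y' _ => ?_
    rw [hG, ← hcardSE]
    exact g_eq_prod p (eZ + y) (eX + y')
  rw [hLHS, hK1, hK2]
  -- sign factorization
  have hsign : ∀ c c' : SE L → ZMod 2,
      (if (∑ a, eZ a * c a) + (∑ a, eX a * c' a) = (0 : ZMod 2) then (1:ℝ) else -1)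
      = chi (ip eZ c) * chi (ip eX c') := by
    intro c c'
    rw [← chi_add]
    rfl
  have hfour : ∀ c c' : SE L → ZMod 2,
      ∑ y : SE L → ZMod 2, ∑ y' : SE L → ZMod 2,
        G y y' * chi (ip y c) * chi (ip y' c')
      = (1 - 4 * p / 3) ^ wt (orv c c') := by
    intro c c'
    rw [hG]
    exact fourier p c c'
  -- expand RHS inner sum via Fourier
  have hT1 : ∑ c ∈ K1, ∑ c' ∈ K2, (1 - 4 * p / 3) ^ wt (orv c c') *
        (if (∑ a, eZ a * c a) + (∑ a, eX a * c' a) = (0 : ZMod 2) then (1:ℝ) else -1)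
      = ∑ c ∈ K1, ∑ c' ∈ K2, ∑ y : SE L → ZMod 2, ∑ y' : SE L → ZMod 2,
          G y y' * chi (ip y c) * chi (ip y' c') * (chi (ip eZ c) * chi (ip eX c')) := by
    refine Finset.sum_congr rfl fun c _ => Finset.sum_congr rfl fun c' _ => ?_
    rw [hsign c c', ← hfour c c', Finset.sum_mul]
    refine Finset.sum_congr rfl fun y _ => ?_
    rw [Finset.sum_mul]
  -- swap sums
  have hT2 : ∑ c ∈ K1, ∑ c' ∈ K2, ∑ y : SE L → ZMod 2, ∑ y' : SE L → ZMod 2,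
        G y y' * chi (ip y c) * chi (ip y' c') * (chi (ip eZ c) * chi (ip eX c'))
      = ∑ y : SE L → ZMod 2, ∑ y' : SE L → ZMod 2, ∑ c ∈ K1, ∑ c' ∈ K2,
        G y y' * chi (ip y c) * chi (ip y' c') * (chi (ip eZ c) * chi (ip eX c')) := by
    calc ∑ c ∈ K1, ∑ c' ∈ K2, ∑ y : SE L → ZMod 2, ∑ y' : SE L → ZMod 2,
        G y y' * chi (ip y c) * chi (ip y' c') * (chi (ip eZ c) * chi (ip eX c'))
        = ∑ c ∈ K1, ∑ y : SE L → ZMod 2, ∑ c' ∈ K2, ∑ y' : SE L → ZMod 2,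
          G y y' * chi (ip y c) * chi (ip y' c') * (chi (ip eZ c) * chi (ip eX c')) :=
        Finset.sum_congr rfl fun c _ => Finset.sum_comm
      _ = ∑ y : SE L → ZMod 2, ∑ c ∈ K1, ∑ c' ∈ K2, ∑ y' : SE L → ZMod 2,
          G y y' * chi (ip y c) * chi (ip y' c') * (chi (ip eZ c) * chi (ip eX c')) :=
        Finset.sum_comm
      _ = ∑ y : SE L → ZMod 2, ∑ c ∈ K1, ∑ y' : SE L → ZMod 2, ∑ c' ∈ K2,
          G y y' * chi (ip y c) * chi (ip y' c') * (chi (ip eZ c) * chi (ip eX c')) :=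
        Finset.sum_congr rfl fun y _ => Finset.sum_congr rfl fun c _ => Finset.sum_comm
      _ = ∑ y : SE L → ZMod 2, ∑ y' : SE L → ZMod 2, ∑ c ∈ K1, ∑ c' ∈ K2,
          G y y' * chi (ip y c) * chi (ip y' c') * (chi (ip eZ c) * chi (ip eX c')) :=
        Finset.sum_congr rfl fun y _ => Finset.sum_comm
  -- inner sums give indicators
  have hinner : ∀ y y' : SE L → ZMod 2,
      ∑ c ∈ K1, ∑ c' ∈ K2,
        G y y' * chi (ip y c) * chi (ip y' c') * (chi (ip eZ c) * chi (ip eX c'))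
      = G y y' * (if (∃ u, (sM2 L).mulVec u = y + eZ) then ((K1.card : ℝ)) else 0)
          * (if (∃ u, ((sM1 L)ᵀ).mulVec u = y' + eX) then ((K2.card : ℝ)) else 0) := by
    intro y y'
    have hpt : ∀ c c' : SE L → ZMod 2,
        G y y' * chi (ip y c) * chi (ip y' c') * (chi (ip eZ c) * chi (ip eX c'))
        = chi (ip (y + eZ) c) * chi (ip (y' + eX) c') * G y y' := by
      intro c c'
      rw [ip_add_left, ip_add_left, chi_add, chi_add]
      ring
    calc ∑ c ∈ K1, ∑ c' ∈ K2,
        G y y' * chi (ip y c) * chi (ip y' c') * (chi (ip eZ c) * chi (ip eX c'))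
        = ∑ c ∈ K1, ∑ c' ∈ K2, chi (ip (y + eZ) c) * chi (ip (y' + eX) c') * G y y' :=
          Finset.sum_congr rfl fun c _ => Finset.sum_congr rfl fun c' _ => hpt c c'
      _ = (∑ c ∈ K1, chi (ip (y + eZ) c)) * (∑ c' ∈ K2, chi (ip (y' + eX) c')) * G y y' := by
          rw [Finset.sum_mul_sum, Finset.sum_mul]
          refine Finset.sum_congr rfl fun c _ => ?_
          rw [Finset.sum_mul]
      _ = G y y' * (if (∃ u, (sM2 L).mulVec u = y + eZ) then ((K1.card : ℝ)) else 0)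
          * (if (∃ u, ((sM1 L)ᵀ).mulVec u = y' + eX) then ((K2.card : ℝ)) else 0) := by
          rw [key_orth (sM2 L) (y + eZ), key_orth ((sM1 L)ᵀ) (y' + eX)]
          ring
  -- reindex
  have hcancel : ∀ v w : SE L → ZMod 2, v + w + v = w := by
    intro v w; rw [add_comm v w, addaddself]
  have hcancel2 : ∀ v w : SE L → ZMod 2, v + (v + w) = w := by
    intro v w; rw [← add_assoc, addself, zero_add]
  have hre : ∑ w : SE L → ZMod 2, ∑ w' : SE L → ZMod 2,
      (G (eZ + w) (eX + w') * (if (∃ u, (sM2 L).mulVec u = w) then ((K1.card : ℝ)) else 0)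
        * (if (∃ u, ((sM1 L)ᵀ).mulVec u = w') then ((K2.card : ℝ)) else 0))
      = ∑ y : SE L → ZMod 2, ∑ y' : SE L → ZMod 2,
        (G y y' * (if (∃ u, (sM2 L).mulVec u = y + eZ) then ((K1.card : ℝ)) else 0)
          * (if (∃ u, ((sM1 L)ᵀ).mulVec u = y' + eX) then ((K2.card : ℝ)) else 0)) := by
    refine Fintype.sum_equiv (Equiv.addLeft eZ) _ _ ?_
    intro w
    refine Fintype.sum_equiv (Equiv.addLeft eX) _ _ ?_
    intro w'
    simp only [Equiv.coe_addLeft]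
    simp only [hcancel]
  have hflt1 : Finset.univ.filter (fun w : SE L → ZMod 2 => ∃ u, (sM2 L).mulVec u = w)
      = A1 := by
    ext z; simp [A1, Af]
  have hflt2 : Finset.univ.filter (fun w : SE L → ZMod 2 => ∃ u, ((sM1 L)ᵀ).mulVec u = w)
      = A2 := by
    ext z; simp [A2, Af]
  have hind : ∑ w : SE L → ZMod 2, ∑ w' : SE L → ZMod 2,
      (G (eZ + w) (eX + w') * (if (∃ u, (sM2 L).mulVec u = w) then ((K1.card : ℝ)) else 0)
        * (if (∃ u, ((sM1 L)ᵀ).mulVec u = w') then ((K2.card : ℝ)) else 0))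
      = (K1.card : ℝ) * (K2.card : ℝ) * ∑ w ∈ A1, ∑ w' ∈ A2, G (eZ + w) (eX + w') := by
    have hpt : ∀ w w' : SE L → ZMod 2,
        (G (eZ + w) (eX + w') * (if (∃ u, (sM2 L).mulVec u = w) then ((K1.card : ℝ)) else 0)
          * (if (∃ u, ((sM1 L)ᵀ).mulVec u = w') then ((K2.card : ℝ)) else 0))
        = if (∃ u, (sM2 L).mulVec u = w) then
            (if (∃ u, ((sM1 L)ᵀ).mulVec u = w') then
              ((K1.card : ℝ) * (K2.card : ℝ)) * G (eZ + w) (eX + w') else 0) else 0 := by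
      intro w w'
      by_cases h1 : ∃ u, (sM2 L).mulVec u = w <;>
        by_cases h2 : ∃ u, ((sM1 L)ᵀ).mulVec u = w' <;>
        simp [h1, h2] <;> ring
    calc ∑ w : SE L → ZMod 2, ∑ w' : SE L → ZMod 2,
        (G (eZ + w) (eX + w') * (if (∃ u, (sM2 L).mulVec u = w) then ((K1.card : ℝ)) else 0)
          * (if (∃ u, ((sM1 L)ᵀ).mulVec u = w') then ((K2.card : ℝ)) else 0))
        = ∑ w : SE L → ZMod 2, (if (∃ u, (sM2 L).mulVec u = w) then
            (∑ w' : SE L → ZMod 2, (if (∃ u, ((sM1 L)ᵀ).mulVec u = w') then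
              ((K1.card : ℝ) * (K2.card : ℝ)) * G (eZ + w) (eX + w') else 0)) else 0) := by
          refine Finset.sum_congr rfl fun w _ => ?_
          rw [Finset.sum_congr rfl fun w' (_ : w' ∈ Finset.univ) => hpt w w']
          by_cases h1 : ∃ u, (sM2 L).mulVec u = w
          · simp [h1]
          · simp [h1]
      _ = ∑ w ∈ Finset.univ.filter (fun w : SE L → ZMod 2 => ∃ u, (sM2 L).mulVec u = w),
            (∑ w' : SE L → ZMod 2, (if (∃ u, ((sM1 L)ᵀ).mulVec u = w') then
              ((K1.card : ℝ) * (K2.card : ℝ)) * G (eZ + w) (eX + w') else 0)) :=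
          (Finset.sum_filter _ _).symm
      _ = ∑ w ∈ A1, ∑ w' ∈ Finset.univ.filter
            (fun w' : SE L → ZMod 2 => ∃ u, ((sM1 L)ᵀ).mulVec u = w'),
              ((K1.card : ℝ) * (K2.card : ℝ)) * G (eZ + w) (eX + w') := by
          rw [hflt1]
          exact Finset.sum_congr rfl fun w _ => (Finset.sum_filter _ _).symm
      _ = (K1.card : ℝ) * (K2.card : ℝ) * ∑ w ∈ A1, ∑ w' ∈ A2, G (eZ + w) (eX + w') := by
          rw [hflt2, Finset.mul_sum]
          exact Finset.sum_congr rfl fun w _ => (Finset.mul_sum _ _ _).symm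
  -- cardinal identities
  have h2ne : (2:ℝ) ≠ 0 := two_ne_zero
  have hKc1 : (2:ℝ) ^ m * ((K1.card : ℝ)) = 2 ^ n := by
    have := cardK_real (sM2 L) hinj2
    rw [hcardSP, hcardSE] at this
    exact this
  have hKc2 : (2:ℝ) ^ mstar * ((K2.card : ℝ)) = 2 ^ n := by
    have := cardK_real ((sM1 L)ᵀ) hinj1
    rw [show Fintype.card (SV L) = mstar from hcardSV,
      show Fintype.card (SE L) = n from hcardSE] at this
    exact this
  have e1 : ((K1.card : ℝ)) = 2 ^ n / 2 ^ m := by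
    rw [eq_div_iff (pow_ne_zero _ h2ne)]
    linarith [hKc1]
  have e2 : ((K2.card : ℝ)) = 2 ^ n / 2 ^ mstar := by
    rw [eq_div_iff (pow_ne_zero _ h2ne)]
    linarith [hKc2]
  -- put everything together
  rw [hT1, hT2,
    Finset.sum_congr rfl fun y (_ : y ∈ Finset.univ) =>
      Finset.sum_congr rfl fun y' (_ : y' ∈ Finset.univ) => hinner y y',
    ← hre, hind, e1, e2,
    show -(2 * (n:ℤ) - (m:ℤ) - (mstar:ℤ)) = ((m:ℤ) + (mstar:ℤ)) - ((n:ℤ) + (n:ℤ)) by ring,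
    zpow_sub₀ h2ne, zpow_add₀ h2ne, zpow_add₀ h2ne, zpow_natCast, zpow_natCast,
    zpow_natCast]
  have hpow : ∀ k : ℕ, ((2:ℝ)) ^ k ≠ 0 := fun k => pow_ne_zero _ h2ne
  field_simp
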